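/- Define, for Hermitian X on a finite-dimensional complex Hilbert space H, the function N(X) = max{⟨T₀ - T₁, X⟩ : T₀, T₁ ⪰ 0, T₀ + T₁ ∈ K}, where K is a fixed nonempty compact convex set of positive semidefinite operators that contains (1/dim H)·I. Then N satisfies the triangle inequality, is absolutely homogeneous (N(aX) = |a|·N(X) for real a), and N(X) ≥ (1/dim H)·‖X‖₁; in particular N is a norm on Hermitian operators. -/

import Mathlib

open Matrix ComplexOrder

/-- The positive semidefinite square root of a positive semidefinite matrix
(the definition of `Matrix.PosSemidef.sqrt` in the older Mathlib, since removed). -/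
noncomputable def PosSemidef_sqrt {n : ℕ} {A : Matrix (Fin n) (Fin n) ℂ} (hA : A.PosSemidef) :
    Matrix (Fin n) (Fin n) ℂ :=
  hA.1.eigenvectorUnitary.1 * diagonal ((↑) ∘ (√·) ∘ hA.1.eigenvalues) *
  (star hA.1.eigenvectorUnitary : Matrix (Fin n) (Fin n) ℂ)

/-- The trace norm of a matrix: the sum of its singular values, i.e. `Tr √(XᴴX)`. -/
noncomputable def traceNorm {n : ℕ} (X : Matrix (Fin n) (Fin n) ℂ) : ℝ :=
  ((PosSemidef_sqrt (Matrix.posSemidef_conjTranspose_mul_self X)).trace).re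

open scoped MatrixOrder in
lemma psdSqrt_eq {n : ℕ} {A : Matrix (Fin n) (Fin n) ℂ} (hA : A.PosSemidef) :
    PosSemidef_sqrt hA = CFC.sqrt A := by
  rw [CFC.sqrt_eq_cfc, cfc_nnreal_eq_real _ A, hA.1.cfc_eq]
  simp only [IsHermitian.cfc, PosSemidef_sqrt, Unitary.conjStarAlgAut_apply]
  congr 3
  funext k
  simp [Real.coe_toNNReal', max_eq_left (hA.eigenvalues_nonneg k)]

lemma trace_conj_diag {n : ℕ} {U : Matrix (Fin n) (Fin n) ℂ}
    (h2 : star U * U = 1) (d : Fin n → ℂ) :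
    (U * Matrix.diagonal d * star U).trace = ∑ k, d k := by
  rw [Matrix.trace_mul_cycle, h2, Matrix.one_mul, Matrix.trace_diagonal]

lemma psd_entry_bound {n : ℕ} {T : Matrix (Fin n) (Fin n) ℂ} (hT : T.PosSemidef) (i j : Fin n) :
    ‖T i j‖ ≤ T.trace.re := by
  have hH := hT.isHermitian
  set U : Matrix (Fin n) (Fin n) ℂ := (hH.eigenvectorUnitary : Matrix (Fin n) (Fin n) ℂ) with hUdef
  have h2 : star U * U = 1 := Matrix.mem_unitaryGroup_iff'.mp hH.eigenvectorUnitary.2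
  have hUb : ∀ (a b : Fin n), ‖U a b‖ ≤ 1 := by
    intro a b
    have hcol : ∑ c, star (U c b) * U c b = 1 := by
      have := congrFun (congrFun h2 b) b
      simpa [Matrix.mul_apply, Matrix.one_apply, Matrix.conjTranspose_apply] using this
    have hsum : ∑ c, ‖U c b‖ ^ 2 = 1 := by
      have := congrArg Complex.re hcol
      simpa [Complex.mul_re, Complex.normSq_apply, ← Complex.sq_norm, Complex.sq_norm,
        Complex.normSq_apply, Complex.re_sum] using this
    have hle : ‖U a b‖ ^ 2 ≤ 1 := by
      rw [← hsum]
      exact Finset.single_le_sum (f := fun c => ‖U c b‖ ^ 2)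
        (fun c _ => sq_nonneg _) (Finset.mem_univ a)
    exact (pow_le_one_iff_of_nonneg (norm_nonneg _) two_ne_zero).mp hle
  have hspec := hH.spectral_theorem
  have hev := hT.eigenvalues_nonneg
  have htr : T.trace.re = ∑ k, hH.eigenvalues k := by
    conv_lhs => rw [hspec, Unitary.conjStarAlgAut_apply]
    rw [trace_conj_diag h2]
    simp [Complex.re_sum, Function.comp]
  have hentry : T i j = ∑ k, (hH.eigenvalues k : ℂ) * (U i k * star (U j k)) := by
    conv_lhs => rw [hspec, Unitary.conjStarAlgAut_apply]
    rw [Matrix.mul_apply]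
    congr 1; funext k
    simp only [Matrix.mul_apply, Matrix.diagonal_apply, Matrix.conjTranspose_apply,
      Function.comp, mul_ite, mul_zero, Finset.sum_ite_eq', Finset.mem_univ, if_true, star_eq_conjTranspose]
    rw [← hUdef]
    rw [show (RCLike.ofReal (hH.eigenvalues k) : ℂ) = ((hH.eigenvalues k : ℝ) : ℂ) from rfl]
    ring
  rw [hentry, htr]
  calc ‖∑ k, (hH.eigenvalues k : ℂ) * (U i k * star (U j k))‖
      ≤ ∑ k, ‖(hH.eigenvalues k : ℂ) * (U i k * star (U j k))‖ := by
        exact norm_sum_le _ _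
    _ ≤ ∑ k, hH.eigenvalues k := by
        apply Finset.sum_le_sum
        intro k _
        rw [norm_mul, norm_mul, Complex.norm_of_nonneg (hev k)]
        have hc : ‖star (U j k)‖ = ‖U j k‖ := Complex.norm_conj _
        rw [hc]
        exact mul_le_of_le_one_right (hev k)
          (mul_le_one₀ (hUb i k) (norm_nonneg _) (hUb j k))


lemma conj_mul_conj {n : ℕ} {U : Matrix (Fin n) (Fin n) ℂ}
    (h2 : star U * U = 1) (A B : Matrix (Fin n) (Fin n) ℂ) :
    (U * A * star U) * (U * B * star U) = U * (A * B) * star U := by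
  simp only [Matrix.mul_assoc]
  rw [← Matrix.mul_assoc (star U) U, h2, Matrix.one_mul]

lemma conj_psd {n : ℕ} {U : Matrix (Fin n) (Fin n) ℂ} (d : Fin n → ℝ)
    (hd : ∀ k, 0 ≤ d k) :
    (U * Matrix.diagonal (fun k => (d k : ℂ)) * star U).PosSemidef := by
  rw [Matrix.star_eq_conjTranspose]
  refine Matrix.PosSemidef.mul_mul_conjTranspose_same (Matrix.PosSemidef.diagonal ?_) U
  intro k
  simpa using Complex.zero_le_real.mpr (hd k)

lemma herm_trace_re {n : ℕ} {T : Matrix (Fin n) (Fin n) ℂ} (hH : T.IsHermitian) :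
    T.trace.re = ∑ k, hH.eigenvalues k := by
  have h2 : star (hH.eigenvectorUnitary : Matrix (Fin n) (Fin n) ℂ) *
      (hH.eigenvectorUnitary : Matrix (Fin n) (Fin n) ℂ) = 1 :=
    Matrix.mem_unitaryGroup_iff'.mp hH.eigenvectorUnitary.2
  conv_lhs => rw [hH.spectral_theorem, Unitary.conjStarAlgAut_apply]
  rw [trace_conj_diag h2]
  simp [Complex.re_sum, Function.comp]

lemma psd_trace_re_nonneg {n : ℕ} {T : Matrix (Fin n) (Fin n) ℂ} (hT : T.PosSemidef) :
    0 ≤ T.trace.re := by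
  rw [herm_trace_re hT.isHermitian]
  exact Finset.sum_nonneg fun k _ => hT.eigenvalues_nonneg k

lemma trace_mul_re_le {n : ℕ} {T : Matrix (Fin n) (Fin n) ℂ} (hT : T.PosSemidef)
    (X : Matrix (Fin n) (Fin n) ℂ) :
    ((T * X).trace).re ≤ T.trace.re * ∑ i, ∑ j, ‖X j i‖ := by
  calc ((T * X).trace).re ≤ ‖(T * X).trace‖ := Complex.re_le_norm _
    _ = ‖∑ i, ∑ j, T i j * X j i‖ := by
        simp only [Matrix.trace, Matrix.diag, Matrix.mul_apply]
    _ ≤ ∑ i, ∑ j, ‖T i j * X j i‖ := by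
        refine (norm_sum_le _ _).trans (Finset.sum_le_sum fun i _ => ?_)
        exact norm_sum_le _ _
    _ ≤ ∑ i, ∑ j, T.trace.re * ‖X j i‖ := by
        refine Finset.sum_le_sum fun i _ => Finset.sum_le_sum fun j _ => ?_
        rw [norm_mul]
        exact mul_le_mul_of_nonneg_right (psd_entry_bound hT i j) (norm_nonneg _)
    _ = T.trace.re * ∑ i, ∑ j, ‖X j i‖ := by
        rw [Finset.mul_sum]
        exact Finset.sum_congr rfl fun i _ => (Finset.mul_sum _ _ _).symm

open scoped MatrixOrder in
lemma traceNorm_herm {n : ℕ} {X : Matrix (Fin n) (Fin n) ℂ} (hX : X.IsHermitian) :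
    traceNorm X = ∑ k, |hX.eigenvalues k| := by
  set U : Matrix (Fin n) (Fin n) ℂ := (hX.eigenvectorUnitary : Matrix (Fin n) (Fin n) ℂ) with hUdef
  have h2 : star U * U = 1 := Matrix.mem_unitaryGroup_iff'.mp hX.eigenvectorUnitary.2
  set B : Matrix (Fin n) (Fin n) ℂ :=
    U * Matrix.diagonal (fun k => ((|hX.eigenvalues k| : ℝ) : ℂ)) * star U with hBdef
  have hB : B.PosSemidef := conj_psd _ (fun k => abs_nonneg _)
  have hsq : B ^ 2 = Xᴴ * X := by
    rw [hX.eq, pow_two, hBdef, conj_mul_conj h2, Matrix.diagonal_mul_diagonal]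
    conv_rhs => rw [hX.spectral_theorem, Unitary.conjStarAlgAut_apply]
    rw [conj_mul_conj h2, Matrix.diagonal_mul_diagonal]
    have hdd : (fun i => ((|hX.eigenvalues i| : ℝ) : ℂ) * ((|hX.eigenvalues i| : ℝ) : ℂ))
        = (fun i => (RCLike.ofReal ∘ hX.eigenvalues) i * (RCLike.ofReal ∘ hX.eigenvalues) i) := by
      funext k
      simp only [Function.comp_apply]
      rw [show (RCLike.ofReal (hX.eigenvalues k) : ℂ) = ((hX.eigenvalues k : ℝ) : ℂ) from rfl,
        ← Complex.ofReal_mul, ← Complex.ofReal_mul, abs_mul_abs_self _]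
    rw [hdd]
  have hBs : B = PosSemidef_sqrt (Matrix.posSemidef_conjTranspose_mul_self X) := by
    rw [psdSqrt_eq]
    exact (CFC.sqrt_unique (by rw [← pow_two]; exact hsq) hB.nonneg).symm
  rw [traceNorm, ← hBs, hBdef, trace_conj_diag h2]
  simp [Complex.re_sum]

lemma herm_eigen_zero {n : ℕ} {X : Matrix (Fin n) (Fin n) ℂ} (hX : X.IsHermitian)
    (h : ∀ k, hX.eigenvalues k = 0) : X = 0 := by
  have := hX.spectral_theorem
  rw [this, Unitary.conjStarAlgAut_apply]
  have hd : Matrix.diagonal (RCLike.ofReal ∘ hX.eigenvalues : Fin n → ℂ) = 0 := by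
    ext i j
    by_cases hij : i = j <;> simp [Matrix.diagonal, hij, h]
  rw [hd, Matrix.mul_zero, Matrix.zero_mul]

lemma real_smul_one_eq_diagonal {n : ℕ} (c : ℝ) :
    c • (1 : Matrix (Fin n) (Fin n) ℂ) = Matrix.diagonal (fun _ => (c : ℂ)) := by
  ext i j
  by_cases h : i = j <;>
    simp [Matrix.smul_apply, Matrix.one_apply, Matrix.diagonal, h, Complex.real_smul]

/-- `N(X) = max{⟨T₀ - T₁, X⟩ : T₀, T₁ ⪰ 0, T₀ + T₁ ∈ K}` where `K` is a nonempty compact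
convex set of positive semidefinite operators containing `(1/dim)·I`.  Then `N` satisfies
the triangle inequality, is absolutely homogeneous, and `N(X) ≥ (1/dim)·‖X‖₁` on Hermitian
operators; in particular `N` is a norm. -/
theorem stmt15 {n : ℕ} (hn : 0 < n) (K : Set (Matrix (Fin n) (Fin n) ℂ))
    (hKne : K.Nonempty) (hKcpt : IsCompact K) (hKconv : Convex ℝ K)
    (hKpsd : ∀ T ∈ K, T.PosSemidef)
    (hKI : ((1 / (n : ℝ)) • (1 : Matrix (Fin n) (Fin n) ℂ)) ∈ K)
    (N : Matrix (Fin n) (Fin n) ℂ → ℝ)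
    (hN : ∀ X, N X = sSup {r : ℝ | ∃ T₀ T₁ : Matrix (Fin n) (Fin n) ℂ,
        T₀.PosSemidef ∧ T₁.PosSemidef ∧ T₀ + T₁ ∈ K ∧
        r = (((T₀ - T₁) * X).trace).re}) :
    (∀ X Y : Matrix (Fin n) (Fin n) ℂ, X.IsHermitian → Y.IsHermitian →
        N (X + Y) ≤ N X + N Y) ∧
    (∀ (a : ℝ) (X : Matrix (Fin n) (Fin n) ℂ), X.IsHermitian →
        N ((a : ℂ) • X) = |a| * N X) ∧
    (∀ X : Matrix (Fin n) (Fin n) ℂ, X.IsHermitian →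
        (1 / (n : ℝ)) * traceNorm X ≤ N X) ∧
    (∀ X : Matrix (Fin n) (Fin n) ℂ, X.IsHermitian → N X = 0 → X = 0) := by
  classical
  set S : Matrix (Fin n) (Fin n) ℂ → Set ℝ := fun X => {r : ℝ |
    ∃ T₀ T₁ : Matrix (Fin n) (Fin n) ℂ,
      T₀.PosSemidef ∧ T₁.PosSemidef ∧ T₀ + T₁ ∈ K ∧
      r = (((T₀ - T₁) * X).trace).re} with hSdef
  have hN' : ∀ X, N X = sSup (S X) := hN
  -- continuity of the trace functional
  have hcont : Continuous fun T : Matrix (Fin n) (Fin n) ℂ => T.trace.re := by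
    apply Complex.continuous_re.comp
    show Continuous fun T : Matrix (Fin n) (Fin n) ℂ => ∑ i, T i i
    exact continuous_finset_sum _ fun i _ => (continuous_apply i).comp (continuous_apply i)
  obtain ⟨Tm, hTmK, hTmmax⟩ := hKcpt.exists_isMaxOn hKne hcont.continuousOn
  have hTm : ∀ T ∈ K, T.trace.re ≤ Tm.trace.re := fun T hT => hTmmax hT
  set M : ℝ := Tm.trace.re with hMdef
  -- upper bound for the sets
  have hbound : ∀ X, ∀ r ∈ S X, r ≤ M * ∑ i, ∑ j, ‖X j i‖ := by
    rintro X r ⟨T₀, T₁, h0, h1, hKmem, rfl⟩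
    have hC : (0:ℝ) ≤ ∑ i, ∑ j, ‖X j i‖ :=
      Finset.sum_nonneg fun i _ => Finset.sum_nonneg fun j _ => norm_nonneg _
    have e : (((T₀ - T₁) * X).trace).re = ((T₀ * X).trace).re - ((T₁ * X).trace).re := by
      rw [Matrix.sub_mul, Matrix.trace_sub, Complex.sub_re]
    have b0 := trace_mul_re_le h0 X
    have b1 := trace_mul_re_le h1 (-X)
    rw [Matrix.mul_neg, Matrix.trace_neg, Complex.neg_re] at b1
    have hCneg : ∑ i, ∑ j, ‖(-X) j i‖ = ∑ i, ∑ j, ‖X j i‖ := by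
      simp
    rw [hCneg] at b1
    have htr01 : T₀.trace.re + T₁.trace.re ≤ M := by
      have : (T₀ + T₁).trace.re = T₀.trace.re + T₁.trace.re := by
        rw [Matrix.trace_add, Complex.add_re]
      have h := hTm _ hKmem
      linarith [this ▸ h]
    have key : (T₀.trace.re + T₁.trace.re) * (∑ i, ∑ j, ‖X j i‖)
        ≤ M * ∑ i, ∑ j, ‖X j i‖ :=
      mul_le_mul_of_nonneg_right htr01 hC
    rw [e]
    nlinarith [b0, b1, key]
  have hBdd : ∀ X, BddAbove (S X) := fun X =>
    ⟨M * ∑ i, ∑ j, ‖X j i‖, fun r hr => hbound X r hr⟩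
  have hle : ∀ Z, ∀ r ∈ S Z, r ≤ N Z := fun Z r hr => (hN' Z) ▸ le_csSup (hBdd Z) hr
  -- zero belongs to every S X
  have h0mem : ∀ X, (0:ℝ) ∈ S X := by
    intro X
    have hc2 : (0:ℝ) ≤ 1/(2*(n:ℝ)) := by positivity
    refine ⟨Matrix.diagonal (fun _ => ((1/(2*(n:ℝ)) : ℝ) : ℂ)),
      Matrix.diagonal (fun _ => ((1/(2*(n:ℝ)) : ℝ) : ℂ)), ?_, ?_, ?_, ?_⟩
    · exact Matrix.PosSemidef.diagonal fun k => by simpa using Complex.zero_le_real.mpr hc2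
    · exact Matrix.PosSemidef.diagonal fun k => by simpa using Complex.zero_le_real.mpr hc2
    · have hne : (n:ℝ) ≠ 0 := Nat.cast_ne_zero.mpr hn.ne'
      have heq : Matrix.diagonal (fun _ => ((1/(2*(n:ℝ)) : ℝ) : ℂ))
          + Matrix.diagonal (fun _ => ((1/(2*(n:ℝ)) : ℝ) : ℂ))
          = (1/(n:ℝ)) • (1 : Matrix (Fin n) (Fin n) ℂ) := by
        rw [Matrix.diagonal_add, real_smul_one_eq_diagonal]
        congr 1
        funext k
        rw [← Complex.ofReal_add]
        congr 1
        field_simp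
        ring
      rw [heq]
      exact hKI
    · rw [sub_self, Matrix.zero_mul, Matrix.trace_zero]
      simp
  have hNnonneg : ∀ X, 0 ≤ N X := fun X => (hN' X) ▸ le_csSup (hBdd X) (h0mem X)
  -- negation closure
  have hneg_mem : ∀ X r, r ∈ S X → -r ∈ S X := by
    rintro X r ⟨T₀, T₁, h0, h1, hKmem, rfl⟩
    refine ⟨T₁, T₀, h1, h0, by rwa [add_comm], ?_⟩
    rw [show T₁ - T₀ = -(T₀ - T₁) from (neg_sub _ _).symm, Matrix.neg_mul,
      Matrix.trace_neg, Complex.neg_re]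
  -- scaling upper bound
  have hsmul_trace : ∀ (a : ℝ) (A X : Matrix (Fin n) (Fin n) ℂ),
      ((A * ((a:ℂ) • X)).trace).re = a * ((A * X).trace).re := by
    intro a A X
    rw [Matrix.mul_smul, Matrix.trace_smul, smul_eq_mul, Complex.re_ofReal_mul]
  have hscale_le : ∀ (a : ℝ) (X : Matrix (Fin n) (Fin n) ℂ), N ((a:ℂ) • X) ≤ |a| * N X := by
    intro a X
    rw [hN' _]
    apply Real.sSup_le
    · rintro r ⟨T₀, T₁, h0, h1, hKmem, rfl⟩
      rw [hsmul_trace a (T₀ - T₁) X]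
      rcases le_or_gt 0 a with ha | ha
      · rw [abs_of_nonneg ha]
        exact mul_le_mul_of_nonneg_left (hle X _ ⟨T₀, T₁, h0, h1, hKmem, rfl⟩) ha
      · rw [abs_of_neg ha, show a * (((T₀ - T₁) * X).trace).re
          = (-a) * (-((((T₀ - T₁) * X).trace).re)) by ring]
        exact mul_le_mul_of_nonneg_left
          (hle X _ (hneg_mem X _ ⟨T₀, T₁, h0, h1, hKmem, rfl⟩)) (by linarith)
    · exact mul_nonneg (abs_nonneg a) (hNnonneg X)
  -- clause 1
  have clause1 : ∀ X Y : Matrix (Fin n) (Fin n) ℂ, N (X + Y) ≤ N X + N Y := by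
    intro X Y
    rw [hN' (X + Y)]
    apply Real.sSup_le
    · rintro r ⟨T₀, T₁, h0, h1, hKmem, rfl⟩
      have e : (((T₀ - T₁) * (X + Y)).trace).re
          = (((T₀ - T₁) * X).trace).re + (((T₀ - T₁) * Y).trace).re := by
        rw [Matrix.mul_add, Matrix.trace_add, Complex.add_re]
      rw [e]
      exact add_le_add (hle X _ ⟨T₀, T₁, h0, h1, hKmem, rfl⟩)
        (hle Y _ ⟨T₀, T₁, h0, h1, hKmem, rfl⟩)
    · exact add_nonneg (hNnonneg X) (hNnonneg Y)
  -- clause 2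
  have clause2 : ∀ (a : ℝ) (X : Matrix (Fin n) (Fin n) ℂ), N ((a:ℂ) • X) = |a| * N X := by
    intro a X
    rcases eq_or_ne a 0 with rfl | ha
    · have h1 := hscale_le 0 X
      have h2 := hNnonneg (((0:ℝ):ℂ) • X)
      simp only [abs_zero, zero_mul] at h1 ⊢
      linarith
    · refine le_antisymm (hscale_le a X) ?_
      have h2 := hscale_le a⁻¹ ((a:ℂ) • X)
      rw [smul_smul, show ((a⁻¹ : ℝ) : ℂ) * (a : ℂ) = 1 by
        push_cast
        field_simp, one_smul, abs_inv] at h2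
      have ha' : (0:ℝ) < |a| := abs_pos.mpr ha
      calc |a| * N X ≤ |a| * (|a|⁻¹ * N ((a:ℂ) • X)) :=
            mul_le_mul_of_nonneg_left h2 (abs_nonneg a)
        _ = N ((a:ℂ) • X) := by field_simp
  -- clause 3
  have clause3 : ∀ X : Matrix (Fin n) (Fin n) ℂ, X.IsHermitian →
      (1 / (n : ℝ)) * traceNorm X ≤ N X := by
    intro X hX
    set U : Matrix (Fin n) (Fin n) ℂ := (hX.eigenvectorUnitary : Matrix (Fin n) (Fin n) ℂ)
      with hUdef
    have h1U : U * star U = 1 := Matrix.mem_unitaryGroup_iff.mp hX.eigenvectorUnitary.2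
    have h2U : star U * U = 1 := Matrix.mem_unitaryGroup_iff'.mp hX.eigenvectorUnitary.2
    set c : ℝ := 1/(n:ℝ) with hcdef
    have hc : 0 ≤ c := by positivity
    set d₀ : Fin n → ℝ := fun k => if 0 < hX.eigenvalues k then c else 0 with hd₀
    set d₁ : Fin n → ℝ := fun k => if 0 < hX.eigenvalues k then 0 else c with hd₁
    set T₀ : Matrix (Fin n) (Fin n) ℂ :=
      U * Matrix.diagonal (fun k => ((d₀ k : ℝ) : ℂ)) * star U with hT₀
    set T₁ : Matrix (Fin n) (Fin n) ℂ :=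
      U * Matrix.diagonal (fun k => ((d₁ k : ℝ) : ℂ)) * star U with hT₁
    have h0psd : T₀.PosSemidef := conj_psd _ fun k => by
      by_cases h : 0 < hX.eigenvalues k <;> simp [hd₀, h, hc]
    have h1psd : T₁.PosSemidef := conj_psd _ fun k => by
      by_cases h : 0 < hX.eigenvalues k <;> simp [hd₁, h, hc]
    have hsumK : T₀ + T₁ ∈ K := by
      have hsum : T₀ + T₁ = (1/(n:ℝ)) • (1 : Matrix (Fin n) (Fin n) ℂ) := by
        rw [hT₀, hT₁, ← Matrix.add_mul, ← Matrix.mul_add, Matrix.diagonal_add,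
          real_smul_one_eq_diagonal]
        have : (fun i => ((d₀ i : ℝ) : ℂ) + ((d₁ i : ℝ) : ℂ))
            = fun _ => ((1/(n:ℝ) : ℝ) : ℂ) := by
          funext k
          rw [← Complex.ofReal_add]
          congr 1
          by_cases h : 0 < hX.eigenvalues k <;> simp [hd₀, hd₁, h, hcdef]
        rw [this]
        calc U * Matrix.diagonal (fun _ => ((1/(n:ℝ) : ℝ) : ℂ)) * star U
            = U * ((1/(n:ℝ)) • (1 : Matrix (Fin n) (Fin n) ℂ)) * star U := by
              rw [real_smul_one_eq_diagonal]
          _ = (1/(n:ℝ)) • (U * 1 * star U) := by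
              rw [mul_smul_comm, smul_mul_assoc]
          _ = Matrix.diagonal (fun _ => ((1/(n:ℝ) : ℝ) : ℂ)) := by
              rw [Matrix.mul_one, h1U, real_smul_one_eq_diagonal]
      rw [hsum]
      exact hKI
    have hval : (((T₀ - T₁) * X).trace).re = (1/(n:ℝ)) * ∑ k, |hX.eigenvalues k| := by
      have hd : T₀ - T₁ = U * Matrix.diagonal (fun k => ((d₀ k - d₁ k : ℝ) : ℂ)) * star U := by
        rw [hT₀, hT₁, ← Matrix.sub_mul, ← Matrix.mul_sub, Matrix.diagonal_sub]
        have : (fun i => ((d₀ i : ℝ) : ℂ) - ((d₁ i : ℝ) : ℂ))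
            = fun k => ((d₀ k - d₁ k : ℝ) : ℂ) := by
          funext k
          rw [← Complex.ofReal_sub]
        rw [this]
      rw [hd]
      conv_lhs => rw [show X = U * Matrix.diagonal (RCLike.ofReal ∘ hX.eigenvalues) * star U
        from hX.spectral_theorem]
      rw [conj_mul_conj h2U, Matrix.diagonal_mul_diagonal, trace_conj_diag h2U]
      rw [Complex.re_sum]
      rw [Finset.mul_sum]
      refine Finset.sum_congr rfl fun k _ => ?_
      rw [show ((RCLike.ofReal ∘ hX.eigenvalues) k : ℂ) = ((hX.eigenvalues k : ℝ) : ℂ) from rfl,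
        ← Complex.ofReal_mul, Complex.ofReal_re]
      by_cases h : 0 < hX.eigenvalues k
      · rw [abs_of_pos h]
        simp [hd₀, hd₁, h, hcdef]
      · rw [abs_of_nonpos (not_lt.mp h)]
        simp only [hd₀, hd₁, if_neg h, if_pos, hcdef]
        ring
    have hmem : (1/(n:ℝ)) * traceNorm X ∈ S X := by
      rw [traceNorm_herm hX]
      exact ⟨T₀, T₁, h0psd, h1psd, hsumK, hval.symm⟩
    rw [hcdef]
    exact hle X _ hmem
  have clause4 : ∀ X : Matrix (Fin n) (Fin n) ℂ, X.IsHermitian → N X = 0 → X = 0 := by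
    intro X hX hNX
    have h3 := clause3 X hX
    rw [hNX] at h3
    have hnr : (0:ℝ) < (n:ℝ) := Nat.cast_pos.mpr hn
    have hnpos : (0:ℝ) < 1/(n:ℝ) := by positivity
    have htn' : traceNorm X = ∑ k, |hX.eigenvalues k| := traceNorm_herm hX
    have hsnn : (0:ℝ) ≤ ∑ k, |hX.eigenvalues k| :=
      Finset.sum_nonneg fun k _ => abs_nonneg _
    have hsum0 : ∑ k, |hX.eigenvalues k| = 0 := by
      rw [htn'] at h3
      nlinarith
    have hzero : ∀ k, hX.eigenvalues k = 0 := by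
      intro k
      have := (Finset.sum_eq_zero_iff_of_nonneg
        (fun k _ => abs_nonneg (hX.eigenvalues k))).mp hsum0 k (Finset.mem_univ k)
      exact abs_eq_zero.mp this
    exact herm_eigen_zero hX hzero
  exact ⟨fun X Y _ _ => clause1 X Y, fun a X _ => clause2 a X, clause3, clause4⟩
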